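/- Let T be an n×n invertible matrix over 𝔽_q with the properties above, and let k₁, k₂ satisfy 0 ≤ n−k₂ ≤ k₁ ≤ n. Define C₁^(i) as the row space of the first k₁ rows of T^i and C₂^(i) as the row space of the last k₂ rows of (T^{−i})^t. Then for every i, (C₂^(i))^⊥ ⊆ C₁^(i), i.e., each (C₁^(i), C₂^(i)) is a conjugate code pair. -/

import Mathlib

def dualCode {F : Type*} [CommRing F] {n : ℕ} (C : Submodule F (Fin n → F)) :
    Submodule F (Fin n → F) where
  carrier := {y | ∀ x ∈ C, dotProduct x y = 0}
  add_mem' := by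
    intro y z hy hz x hx
    simp [dotProduct_add, hy x hx, hz x hx]
  zero_mem' := by
    intro x hx
    simp
  smul_mem' := by
    intro c y hy x hx
    simp [dotProduct_smul, hy x hx]

/-- Row space of the first `k₁` rows of `T^i`. -/
def firstRowsCode {F : Type*} [Field F] {n : ℕ} (T : Matrix (Fin n) (Fin n) F)
    (k₁ : ℕ) (i : ℕ) : Submodule F (Fin n → F) :=
  Submodule.span F {r | ∃ j : Fin n, (j : ℕ) < k₁ ∧ r = (T ^ i) j}

/-- Row space of the last `k₂` rows of `(T⁻¹)^i` transposed. -/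
def lastRowsCode {F : Type*} [Field F] {n : ℕ} (T : Matrix (Fin n) (Fin n) F)
    (k₂ : ℕ) (i : ℕ) : Submodule F (Fin n → F) :=
  Submodule.span F {r | ∃ j : Fin n, n - k₂ ≤ (j : ℕ) ∧ r = (Matrix.transpose (T⁻¹ ^ i)) j}

/-- With `T` as before and `0 ≤ n−k₂ ≤ k₁ ≤ n`, letting `C₁^(i)` be the
row space of the first `k₁` rows of `T^i` and `C₂^(i)` the row space of the last `k₂`
rows of `(T^{−i})ᵗ`, for every `i` we have `(C₂^(i))^⊥ ⊆ C₁^(i)`, i.e., each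
`(C₁^(i), C₂^(i))` is a conjugate code pair. -/
theorem conjugate_pair_from_matrix_powers {F : Type*} [Field F] [Fintype F]
    {n k₁ k₂ : ℕ} (hk : n - k₂ ≤ k₁) (hk₁ : k₁ ≤ n) (hk₂ : k₂ ≤ n)
    (T : Matrix (Fin n) (Fin n) F) (hT : IsUnit T)
    (hord : orderOf T = Fintype.card F ^ n - 1)
    (hclosed : ∀ A ∈ ({0} ∪ {M | ∃ i < Fintype.card F ^ n - 1, M = T ^ i} :
        Set (Matrix (Fin n) (Fin n) F)),
      ∀ B ∈ ({0} ∪ {M | ∃ i < Fintype.card F ^ n - 1, M = T ^ i} :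
        Set (Matrix (Fin n) (Fin n) F)),
      A + B ∈ ({0} ∪ {M | ∃ i < Fintype.card F ^ n - 1, M = T ^ i} :
        Set (Matrix (Fin n) (Fin n) F)) ∧
      A * B ∈ ({0} ∪ {M | ∃ i < Fintype.card F ^ n - 1, M = T ^ i} :
        Set (Matrix (Fin n) (Fin n) F))) :
    ∀ i : ℕ, dualCode (lastRowsCode T k₂ i) ≤ firstRowsCode T k₁ i := by
  intro i y hy
  have hdet : IsUnit (T ^ i).det := by
    rw [Matrix.det_pow]
    exact ((Matrix.isUnit_iff_isUnit_det T).mp hT).pow i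
  have hTd : IsUnit T.det := (Matrix.isUnit_iff_isUnit_det T).mp hT
  have hcomm : Commute T⁻¹ T := by
    unfold Commute SemiconjBy
    rw [Matrix.nonsing_inv_mul T hTd, Matrix.mul_nonsing_inv T hTd]
  have hinv : (T⁻¹ ^ i) * (T ^ i) = 1 := by
    rw [← hcomm.mul_pow, Matrix.nonsing_inv_mul T hTd, one_pow]
  set c : Fin n → F := fun j => dotProduct ((T⁻¹ ^ i).transpose j) y with hc
  have hc0 : ∀ j : Fin n, n - k₂ ≤ (j : ℕ) → c j = 0 := fun j hj =>
    hy _ (Submodule.subset_span ⟨j, hj, rfl⟩)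
  have hy_eq : y = ∑ j : Fin n, c j • (T ^ i) j := by
    funext m
    simp only [Finset.sum_apply, Pi.smul_apply, smul_eq_mul, hc,
      dotProduct, Matrix.transpose_apply]
    simp only [Finset.sum_mul]
    rw [Finset.sum_comm]
    have h1 : ∀ m' : Fin n, (∑ j : Fin n, (T⁻¹ ^ i) m' j * y m' * (T ^ i) j m)
        = y m' * ((T⁻¹ ^ i) * (T ^ i)) m' m := by
      intro m'
      rw [Matrix.mul_apply, Finset.mul_sum]
      apply Finset.sum_congr rfl
      intro j _
      ring
    simp only [h1, hinv, Matrix.one_apply]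
    simp
  rw [hy_eq]
  apply Submodule.sum_mem
  intro j _
  by_cases h : (j : ℕ) < n - k₂
  · exact Submodule.smul_mem _ _ (Submodule.subset_span ⟨j, lt_of_lt_of_le h hk, rfl⟩)
  · rw [hc0 j (le_of_not_gt h), zero_smul]
    exact Submodule.zero_mem _
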